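/- arXiv:1311.7549 — 2 statements merged into one kernel-verified Lean document; each statement's English description precedes it below -/
import Mathlib

section
/- Let u : ℝ^N → ℝ (N ≥ 1) be continuous with a limit c_∞ ∈ ℝ ∪ {±∞} as |x| → ∞. Suppose that for every affine half space H ⊂ ℝ^N, with Q_H denoting the reflection across ∂H, either u(x) ≥ u(Q_H(x)) for all x ∈ H, or u(x) ≤ u(Q_H(x)) for all x ∈ H. Then there exists z ∈ ℝ^N such that x ↦ u(x - z) or x ↦ -u(x - z) is radially symmetric and nonincreasing in the radial variable. -/
open RealInnerProductSpace

namespace Stmt4Aux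

open Filter

variable {N : ℕ}

private lemma inner_unit_self {e : EuclideanSpace ℝ (Fin N)} (he : ‖e‖ = 1) :
    ⟪e, e⟫ = 1 := by
  rw [real_inner_self_eq_norm_mul_norm, he]; norm_num

private lemma refl_inner {e : EuclideanSpace ℝ (Fin N)} (he : ‖e‖ = 1) (lam : ℝ)
    (x : EuclideanSpace ℝ (Fin N)) :
    ⟪x - (2 * (⟪x, e⟫ - lam)) • e, e⟫ = 2 * lam - ⟪x, e⟫ := by
  rw [inner_sub_left, real_inner_smul_left, inner_unit_self he]; ring

private lemma ray_lim (u : EuclideanSpace ℝ (Fin N) → ℝ) (cinf : EReal)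
    (hlim : Tendsto (fun x => (u x : EReal)) (cocompact _) (nhds cinf))
    (x0 v : EuclideanSpace ℝ (Fin N)) (hv : v ≠ 0) :
    Tendsto (fun k : ℕ => (u (x0 + (k : ℝ) • v) : EReal)) atTop (nhds cinf) := by
  apply hlim.comp
  rw [← Metric.cobounded_eq_cocompact]
  apply tendsto_norm_atTop_iff_cobounded.mp
  have hb : ∀ k : ℕ, (k : ℝ) * ‖v‖ - ‖x0‖ ≤ ‖x0 + (k : ℝ) • v‖ := by
    intro k
    have h1 := norm_sub_le (x0 + (k : ℝ) • v) x0
    rw [add_sub_cancel_left, norm_smul, Real.norm_natCast] at h1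
    linarith
  refine tendsto_atTop_mono hb ?_
  have h2 : Tendsto (fun k : ℕ => (k : ℝ) * ‖v‖) atTop atTop :=
    Tendsto.atTop_mul_const (norm_pos_iff.mpr hv) tendsto_natCast_atTop_atTop
  simpa [sub_eq_add_neg] using tendsto_atTop_add_const_right atTop (-‖x0‖) h2

private lemma eq_cinf_of_translate (u : EuclideanSpace ℝ (Fin N) → ℝ) (cinf : EReal)
    (hlim : Tendsto (fun x => (u x : EReal)) (cocompact _) (nhds cinf))
    {v : EuclideanSpace ℝ (Fin N)} (hv : v ≠ 0)
    (ht : ∀ x, u (x - v) = u x) : ∀ x, (u x : EReal) = cinf := by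
  intro x
  have key : ∀ k : ℕ, u (x + (k : ℝ) • (-v)) = u x := by
    intro k; induction k with
    | zero => simp
    | succ n ih =>
        have h1 : x + ((n + 1 : ℕ) : ℝ) • (-v) = (x + (n : ℝ) • (-v)) - v := by
          push_cast; module
        rw [h1, ht, ih]
  have h2 := ray_lim u cinf hlim x (-v) (neg_ne_zero.mpr hv)
  have h3 : (fun k : ℕ => (u (x + (k : ℝ) • (-v)) : EReal)) = fun _ => (u x : EReal) := by
    funext k; rw [key k]
  rw [h3] at h2
  exact tendsto_nhds_unique tendsto_const_nhds h2

private lemma not_allA (u : EuclideanSpace ℝ (Fin N) → ℝ) (cinf : EReal)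
    (hlim : Tendsto (fun x => (u x : EReal)) (cocompact _) (nhds cinf))
    (hnc : ∃ a b : EuclideanSpace ℝ (Fin N), u a ≠ u b)
    {e : EuclideanSpace ℝ (Fin N)} (he : ‖e‖ = 1)
    (hA : ∀ lam : ℝ, ∀ x, lam < ⟪x, e⟫ → u (x - (2 * (⟪x, e⟫ - lam)) • e) ≤ u x) :
    False := by
  have he0 : e ≠ 0 := fun h => by simp [h] at he
  have step : ∀ (y : EuclideanSpace ℝ (Fin N)) (t : ℝ), 0 < t → u y ≤ u (y + t • e) := by
    intro y t ht
    have hx : ⟪y + t • e, e⟫ = ⟪y, e⟫ + t := by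
      rw [inner_add_left, real_inner_smul_left, inner_unit_self he]; ring
    have hlt : ⟪y, e⟫ + t / 2 < ⟪y + t • e, e⟫ := by rw [hx]; linarith
    have h2 := hA (⟪y, e⟫ + t / 2) (y + t • e) hlt
    have h3 : (y + t • e) - (2 * (⟪y + t • e, e⟫ - (⟪y, e⟫ + t / 2))) • e = y := by
      rw [hx]; module
    rwa [h3] at h2
  have hval : ∀ y : EuclideanSpace ℝ (Fin N), (u y : EReal) = cinf := by
    intro y
    have hup : (u y : EReal) ≤ cinf := by
      have h1 := ray_lim u cinf hlim (y + e) e he0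
      refine ge_of_tendsto h1 (Eventually.of_forall fun k => ?_)
      have h2 : (y + e) + (k : ℝ) • e = y + ((k : ℝ) + 1) • e := by module
      rw [h2]
      exact_mod_cast step y ((k : ℝ) + 1) (by positivity)
    have hdown : cinf ≤ (u y : EReal) := by
      have h1 := ray_lim u cinf hlim (y - e) (-e) (neg_ne_zero.mpr he0)
      refine le_of_tendsto h1 (Eventually.of_forall fun k => ?_)
      have h2 : y = ((y - e) + (k : ℝ) • (-e)) + ((k : ℝ) + 1) • e := by module
      have h3 := step ((y - e) + (k : ℝ) • (-e)) ((k : ℝ) + 1) (by positivity)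
      rw [← h2] at h3
      exact_mod_cast h3
    exact le_antisymm hup hdown
  obtain ⟨a, b, hab⟩ := hnc
  exact hab (by exact_mod_cast (hval a).trans (hval b).symm)

private lemma not_allB (u : EuclideanSpace ℝ (Fin N) → ℝ) (cinf : EReal)
    (hlim : Tendsto (fun x => (u x : EReal)) (cocompact _) (nhds cinf))
    (hnc : ∃ a b : EuclideanSpace ℝ (Fin N), u a ≠ u b)
    {e : EuclideanSpace ℝ (Fin N)} (he : ‖e‖ = 1)
    (hB : ∀ lam : ℝ, ∀ x, lam < ⟪x, e⟫ → u x ≤ u (x - (2 * (⟪x, e⟫ - lam)) • e)) :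
    False := by
  have he0 : e ≠ 0 := fun h => by simp [h] at he
  have step : ∀ (y : EuclideanSpace ℝ (Fin N)) (t : ℝ), 0 < t → u (y + t • e) ≤ u y := by
    intro y t ht
    have hx : ⟪y + t • e, e⟫ = ⟪y, e⟫ + t := by
      rw [inner_add_left, real_inner_smul_left, inner_unit_self he]; ring
    have hlt : ⟪y, e⟫ + t / 2 < ⟪y + t • e, e⟫ := by rw [hx]; linarith
    have h2 := hB (⟪y, e⟫ + t / 2) (y + t • e) hlt
    have h3 : (y + t • e) - (2 * (⟪y + t • e, e⟫ - (⟪y, e⟫ + t / 2))) • e = y := by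
      rw [hx]; module
    rwa [h3] at h2
  have hval : ∀ y : EuclideanSpace ℝ (Fin N), (u y : EReal) = cinf := by
    intro y
    have hdown : cinf ≤ (u y : EReal) := by
      have h1 := ray_lim u cinf hlim (y + e) e he0
      refine le_of_tendsto h1 (Eventually.of_forall fun k => ?_)
      have h2 : (y + e) + (k : ℝ) • e = y + ((k : ℝ) + 1) • e := by module
      rw [h2]
      exact_mod_cast step y ((k : ℝ) + 1) (by positivity)
    have hup : (u y : EReal) ≤ cinf := by
      have h1 := ray_lim u cinf hlim (y - e) (-e) (neg_ne_zero.mpr he0)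
      refine ge_of_tendsto h1 (Eventually.of_forall fun k => ?_)
      have h2 : y = ((y - e) + (k : ℝ) • (-e)) + ((k : ℝ) + 1) • e := by module
      have h3 := step ((y - e) + (k : ℝ) • (-e)) ((k : ℝ) + 1) (by positivity)
      rw [← h2] at h3
      exact_mod_cast h3
    exact le_antisymm hup hdown
  obtain ⟨a, b, hab⟩ := hnc
  exact hab (by exact_mod_cast (hval a).trans (hval b).symm)

private lemma sym_of_AB (u : EuclideanSpace ℝ (Fin N) → ℝ)
    {e : EuclideanSpace ℝ (Fin N)} (he : ‖e‖ = 1) {lam : ℝ}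
    (hA : ∀ x, lam < ⟪x, e⟫ → u (x - (2 * (⟪x, e⟫ - lam)) • e) ≤ u x)
    (hB : ∀ x, lam < ⟪x, e⟫ → u x ≤ u (x - (2 * (⟪x, e⟫ - lam)) • e)) :
    ∀ x, u (x - (2 * (⟪x, e⟫ - lam)) • e) = u x := by
  intro x
  rcases lt_trichotomy lam ⟪x, e⟫ with h | h | h
  · exact le_antisymm (hA x h) (hB x h)
  · have h0 : (2 * (⟪x, e⟫ - lam)) = 0 := by rw [← h]; ring
    rw [h0]; simp
  · have hyi : ⟪x - (2 * (⟪x, e⟫ - lam)) • e, e⟫ = 2 * lam - ⟪x, e⟫ := refl_inner he lam x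
    have hylt : lam < ⟪x - (2 * (⟪x, e⟫ - lam)) • e, e⟫ := by rw [hyi]; linarith
    have heq := le_antisymm (hA _ hylt) (hB _ hylt)
    have h2 : (x - (2 * (⟪x, e⟫ - lam)) • e) -
        (2 * (⟪x - (2 * (⟪x, e⟫ - lam)) • e, e⟫ - lam)) • e = x := by
      rw [hyi]; module
    rw [h2] at heq
    exact heq.symm

private lemma sym_unique (u : EuclideanSpace ℝ (Fin N) → ℝ) (cinf : EReal)
    (hlim : Tendsto (fun x => (u x : EReal)) (cocompact _) (nhds cinf))
    (hnc : ∃ a b : EuclideanSpace ℝ (Fin N), u a ≠ u b)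
    {e : EuclideanSpace ℝ (Fin N)} (he : ‖e‖ = 1) {lam lam' : ℝ}
    (h : ∀ x, u (x - (2 * (⟪x, e⟫ - lam)) • e) = u x)
    (h' : ∀ x, u (x - (2 * (⟪x, e⟫ - lam')) • e) = u x) :
    lam = lam' := by
  by_contra hne
  have he0 : e ≠ 0 := fun hh => by simp [hh] at he
  have hv0 : (2 * (lam' - lam)) • e ≠ 0 :=
    smul_ne_zero (fun hc => hne (by linarith [hc, sub_eq_zero.mp (by linarith : lam' - lam = 0)])) he0
  have ht : ∀ x, u (x - (2 * (lam' - lam)) • e) = u x := by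
    intro x
    have hyi : ⟪x - (2 * (⟪x, e⟫ - lam')) • e, e⟫ = 2 * lam' - ⟪x, e⟫ := refl_inner he lam' x
    have hc : (x - (2 * (⟪x, e⟫ - lam')) • e) -
        (2 * (⟪x - (2 * (⟪x, e⟫ - lam')) • e, e⟫ - lam)) • e
        = x - (2 * (lam' - lam)) • e := by
      rw [hyi]; module
    have h1 := h (x - (2 * (⟪x, e⟫ - lam')) • e)
    rw [hc] at h1
    exact h1.trans (h' x)
  have hval := eq_cinf_of_translate u cinf hlim hv0 ht
  obtain ⟨a, b, hab⟩ := hnc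
  exact hab (by exact_mod_cast (hval a).trans (hval b).symm)

private lemma sym_exists (u : EuclideanSpace ℝ (Fin N) → ℝ) (hu : Continuous u) (cinf : EReal)
    (hlim : Tendsto (fun x => (u x : EReal)) (cocompact _) (nhds cinf))
    (hnc : ∃ a b : EuclideanSpace ℝ (Fin N), u a ≠ u b)
    (hhalf : ∀ e : EuclideanSpace ℝ (Fin N), ‖e‖ = 1 → ∀ lam : ℝ,
      (∀ x, lam < ⟪x, e⟫ → u (x - (2 * (⟪x, e⟫ - lam)) • e) ≤ u x) ∨
      (∀ x, lam < ⟪x, e⟫ → u x ≤ u (x - (2 * (⟪x, e⟫ - lam)) • e)))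
    {e : EuclideanSpace ℝ (Fin N)} (he : ‖e‖ = 1) :
    ∃ lam : ℝ, ∀ x, u (x - (2 * (⟪x, e⟫ - lam)) • e) = u x := by
  set SA := {lam : ℝ | ∀ x, lam < ⟪x, e⟫ → u (x - (2 * (⟪x, e⟫ - lam)) • e) ≤ u x} with hSAd
  set SB := {lam : ℝ | ∀ x, lam < ⟪x, e⟫ → u x ≤ u (x - (2 * (⟪x, e⟫ - lam)) • e)} with hSBd
  have hcont : ∀ x : EuclideanSpace ℝ (Fin N),
      Continuous fun lam : ℝ => u (x - (2 * (⟪x, e⟫ - lam)) • e) := by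
    intro x
    exact hu.comp (continuous_const.sub (Continuous.smul (f := fun lam : ℝ => 2 * (⟪x, e⟫ - lam)) (by fun_prop) continuous_const))
  have closedA : IsClosed SA := by
    rw [← isOpen_compl_iff]
    have hc : SAᶜ = ⋃ x : EuclideanSpace ℝ (Fin N),
        (Set.Iio ⟪x, e⟫ ∩ {lam : ℝ | u x < u (x - (2 * (⟪x, e⟫ - lam)) • e)}) := by
      ext lam
      simp only [hSAd, Set.mem_compl_iff, Set.mem_setOf_eq, Set.mem_iUnion, Set.mem_inter_iff,
        Set.mem_Iio, not_forall, not_le]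
      tauto
    rw [hc]
    exact isOpen_iUnion fun x => (isOpen_Iio).inter (isOpen_lt continuous_const (hcont x))
  have closedB : IsClosed SB := by
    rw [← isOpen_compl_iff]
    have hc : SBᶜ = ⋃ x : EuclideanSpace ℝ (Fin N),
        (Set.Iio ⟪x, e⟫ ∩ {lam : ℝ | u (x - (2 * (⟪x, e⟫ - lam)) • e) < u x}) := by
      ext lam
      simp only [hSBd, Set.mem_compl_iff, Set.mem_setOf_eq, Set.mem_iUnion, Set.mem_inter_iff,
        Set.mem_Iio, not_forall, not_le]
      tauto
    rw [hc]
    exact isOpen_iUnion fun x => (isOpen_Iio).inter (isOpen_lt (hcont x) continuous_const)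
  have hneA : SA.Nonempty := by
    by_contra hempty
    rw [Set.not_nonempty_iff_eq_empty] at hempty
    refine not_allB u cinf hlim hnc he fun lam => ?_
    rcases hhalf e he lam with hA | hB
    · exact absurd hA (by intro hmem; exact (Set.eq_empty_iff_forall_notMem.mp hempty lam) hmem)
    · exact hB
  have hneB : SB.Nonempty := by
    by_contra hempty
    rw [Set.not_nonempty_iff_eq_empty] at hempty
    refine not_allA u cinf hlim hnc he fun lam => ?_
    rcases hhalf e he lam with hA | hB
    · exact hA
    · exact absurd hB (by intro hmem; exact (Set.eq_empty_iff_forall_notMem.mp hempty lam) hmem)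
  have hAB : (SA ∩ SB).Nonempty := by
    by_contra hcap
    rw [Set.not_nonempty_iff_eq_empty] at hcap
    have hSAeq : SA = SBᶜ := by
      apply subset_antisymm
      · intro lam hl hmem
        exact Set.eq_empty_iff_forall_notMem.mp hcap lam ⟨hl, hmem⟩
      · intro lam hl
        exact (hhalf e he lam).resolve_right hl
    have hclopen : IsClopen SA := ⟨closedA, by rw [hSAeq]; exact closedB.isOpen_compl⟩
    rcases isClopen_iff.mp hclopen with h0 | h1
    · exact hneA.ne_empty h0
    · obtain ⟨lam, hlam⟩ := hneB
      exact Set.eq_empty_iff_forall_notMem.mp hcap lam ⟨by rw [h1]; trivial, hlam⟩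
  obtain ⟨lam, hA, hB⟩ := hAB
  exact ⟨lam, sym_of_AB u he hA hB⟩

end Stmt4Aux

open Stmt4Aux Filter in
theorem stmt_4 {N : ℕ} (hN : 1 ≤ N) (u : EuclideanSpace ℝ (Fin N) → ℝ)
    (hu : Continuous u) (cinf : EReal)
    (hlim : Filter.Tendsto (fun x => (u x : EReal)) (Filter.cocompact _) (nhds cinf))
    (hhalf : ∀ e : EuclideanSpace ℝ (Fin N), ‖e‖ = 1 → ∀ lam : ℝ,
      (∀ x, lam < ⟪x, e⟫ → u (x - (2 * (⟪x, e⟫ - lam)) • e) ≤ u x) ∨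
      (∀ x, lam < ⟪x, e⟫ → u x ≤ u (x - (2 * (⟪x, e⟫ - lam)) • e))) :
    ∃ z : EuclideanSpace ℝ (Fin N), ∃ f : ℝ → ℝ, AntitoneOn f (Set.Ici 0) ∧
      ((∀ x, u (x - z) = f ‖x‖) ∨ (∀ x, -u (x - z) = f ‖x‖)) := by
  classical
  by_cases hconst : ∀ x y : EuclideanSpace ℝ (Fin N), u x = u y
  · exact ⟨0, fun _ => u 0, fun a _ b _ _ => le_of_eq rfl, Or.inl fun x => hconst _ _⟩
  push_neg at hconst
  have i0 : Fin N := ⟨0, hN⟩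
  set E : Fin N → EuclideanSpace ℝ (Fin N) := fun i => EuclideanSpace.single i 1 with hEd
  have hEnorm : ∀ i, ‖E i‖ = 1 := by intro i; simp [hEd]
  have hEinner : ∀ (x : EuclideanSpace ℝ (Fin N)) (i), ⟪x, E i⟫ = x i := by
    intro x i; simp [hEd, EuclideanSpace.inner_single_right]
  have hEE : ∀ i j, ⟪E i, E j⟫ = if i = j then 1 else 0 := by
    intro i j
    rw [hEinner]
    simp [hEd, EuclideanSpace.single_apply, eq_comm]
  choose lamE hlamE using fun i => sym_exists u hu cinf hlim hconst hhalf (hEnorm i)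
  set z : EuclideanSpace ℝ (Fin N) := ∑ i, lamE i • E i with hzd
  have hrepr : ∀ x : EuclideanSpace ℝ (Fin N), ∑ i, ⟪x, E i⟫ • E i = x := by
    intro x
    have h := (EuclideanSpace.basisFun (Fin N) ℝ).sum_repr' x
    simp only [EuclideanSpace.basisFun_apply] at h
    calc ∑ i, ⟪x, E i⟫ • E i = ∑ i, ⟪E i, x⟫ • E i := by
          refine Finset.sum_congr rfl fun i _ => ?_
          rw [real_inner_comm]
      _ = x := h
  have hTs : ∀ s : Finset (Fin N), ∀ x,
      u (x + ∑ i ∈ s, (2 * (lamE i - ⟪x, E i⟫)) • E i) = u x := by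
    intro s
    induction s using Finset.induction_on with
    | empty => intro x; simp
    | @insert j s hj ih =>
        intro x
        have hyj : ⟪x + ∑ i ∈ s, (2 * (lamE i - ⟪x, E i⟫)) • E i, E j⟫ = ⟪x, E j⟫ := by
          rw [inner_add_left, sum_inner]
          have hzero : ∀ i ∈ s, ⟪(2 * (lamE i - ⟪x, E i⟫)) • E i, E j⟫ = 0 := by
            intro i hi
            rw [real_inner_smul_left, hEE, if_neg (by rintro rfl; exact hj hi)]
            ring
          rw [Finset.sum_eq_zero hzero, add_zero]
        have hsym := hlamE j (x + ∑ i ∈ s, (2 * (lamE i - ⟪x, E i⟫)) • E i)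
        have hstep : (x + ∑ i ∈ s, (2 * (lamE i - ⟪x, E i⟫)) • E i) -
            (2 * (⟪x + ∑ i ∈ s, (2 * (lamE i - ⟪x, E i⟫)) • E i, E j⟫ - lamE j)) • E j
            = x + ∑ i ∈ insert j s, (2 * (lamE i - ⟪x, E i⟫)) • E i := by
          rw [hyj, Finset.sum_insert hj]
          module
        rw [hstep] at hsym
        rw [hsym]
        exact ih x
  have husigma : ∀ x, u ((2 : ℝ) • z - x) = u x := by
    intro x
    have h1 := hTs Finset.univ x
    have h3 : ∑ i, (2 * (lamE i - ⟪x, E i⟫)) • E i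
        = (2 : ℝ) • (∑ i, lamE i • E i) - (2 : ℝ) • (∑ i, ⟪x, E i⟫ • E i) := by
      rw [Finset.smul_sum, Finset.smul_sum, ← Finset.sum_sub_distrib]
      refine Finset.sum_congr rfl fun i _ => ?_
      module
    rw [h3, hrepr x, ← hzd] at h1
    have h2 : x + ((2 : ℝ) • z - (2 : ℝ) • x) = (2 : ℝ) • z - x := by module
    rw [h2] at h1
    exact h1
  have hcenter : ∀ e : EuclideanSpace ℝ (Fin N), ‖e‖ = 1 →
      ∀ x, u (x - (2 * (⟪x, e⟫ - ⟪z, e⟫)) • e) = u x := by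
    intro e he
    obtain ⟨lam, hsym⟩ := sym_exists u hu cinf hlim hconst hhalf he
    have hsym2 : ∀ x, u (x - (2 * (⟪x, e⟫ - (2 * ⟪z, e⟫ - lam))) • e) = u x := by
      intro x
      have hwi : ⟪(2 : ℝ) • z - x, e⟫ = 2 * ⟪z, e⟫ - ⟪x, e⟫ := by
        rw [inner_sub_left, real_inner_smul_left]
      have hkey : (2 : ℝ) • z - (((2 : ℝ) • z - x) - (2 * (⟪(2 : ℝ) • z - x, e⟫ - lam)) • e)
          = x - (2 * (⟪x, e⟫ - (2 * ⟪z, e⟫ - lam))) • e := by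
        rw [hwi]; module
      calc u (x - (2 * (⟪x, e⟫ - (2 * ⟪z, e⟫ - lam))) • e)
          = u ((2 : ℝ) • z - (((2 : ℝ) • z - x) - (2 * (⟪(2 : ℝ) • z - x, e⟫ - lam)) • e)) := by
            rw [hkey]
        _ = u (((2 : ℝ) • z - x) - (2 * (⟪(2 : ℝ) • z - x, e⟫ - lam)) • e) := husigma _
        _ = u ((2 : ℝ) • z - x) := hsym _
        _ = u x := husigma x
    have hlz : lam = 2 * ⟪z, e⟫ - lam := sym_unique u cinf hlim hconst he hsym hsym2
    have hlz2 : lam = ⟪z, e⟫ := by linarith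
    rw [← hlz2]
    exact hsym
  have hradial : ∀ w w' : EuclideanSpace ℝ (Fin N), ‖w‖ = ‖w'‖ → u (z + w) = u (z + w') := by
    intro w w' hnorm
    by_cases hww : w = w'
    · rw [hww]
    have hd0 : ‖w - w'‖ ≠ 0 := by simpa [sub_eq_zero] using hww
    set e : EuclideanSpace ℝ (Fin N) := ‖w - w'‖⁻¹ • (w - w') with hed
    have he : ‖e‖ = 1 := by
      rw [hed, norm_smul, norm_inv, norm_norm, inv_mul_cancel₀ hd0]
    have hwe : ⟪w, e⟫ = ‖w - w'‖ / 2 := by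
      rw [hed, real_inner_smul_right]
      have h2 : ‖w - w'‖ ^ 2 = ‖w‖ ^ 2 - 2 * ⟪w, w'⟫ + ‖w'‖ ^ 2 := norm_sub_sq_real w w'
      rw [← hnorm] at h2
      have h1 : ⟪w, w - w'⟫ = ‖w - w'‖ ^ 2 / 2 := by
        rw [inner_sub_right, real_inner_self_eq_norm_sq]
        linarith
      rw [h1]
      field_simp
    have hinner : ⟪z + w, e⟫ - ⟪z, e⟫ = ⟪w, e⟫ := by rw [inner_add_left]; ring
    have hrefl : (z + w) - (2 * (⟪z + w, e⟫ - ⟪z, e⟫)) • e = z + w' := by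
      have hco : (2 * (⟪z + w, e⟫ - ⟪z, e⟫)) = ‖w - w'‖ := by
        rw [hinner, hwe]; ring
      rw [hco, hed, smul_smul, mul_inv_cancel₀ hd0, one_smul]
      module
    have hfin := hcenter e he (z + w)
    rw [hrefl] at hfin
    exact hfin.symm
  -- the radial profile
  set E0 : EuclideanSpace ℝ (Fin N) := E i0 with hE0d
  have hE0 : ‖E0‖ = 1 := hEnorm i0
  set f : ℝ → ℝ := fun r => u (z + r • E0) with hfd
  have hfu : ∀ x : EuclideanSpace ℝ (Fin N), u (z + x) = f ‖x‖ := by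
    intro x
    refine hradial x (‖x‖ • E0) ?_
    rw [norm_smul, hE0, norm_norm, mul_one]
  have hfeven : ∀ a : ℝ, 0 ≤ a → u (z + (-a) • E0) = f a := by
    intro a ha
    refine hradial ((-a) • E0) (a • E0) ?_
    rw [norm_smul, norm_smul, norm_neg]
  have hiz : ∀ t : ℝ, ⟪z + t • E0, E0⟫ = ⟪z, E0⟫ + t := by
    intro t; rw [inner_add_left, real_inner_smul_left, inner_unit_self hE0]; ring
  have flim : Tendsto (fun r : ℝ => (f r : EReal)) atTop (nhds cinf) := by
    apply hlim.comp
    rw [← Metric.cobounded_eq_cocompact]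
    apply tendsto_norm_atTop_iff_cobounded.mp
    have hb : ∀ r : ℝ, r - ‖z‖ ≤ ‖z + r • E0‖ := by
      intro r
      have h1 := norm_sub_le (z + r • E0) z
      rw [add_sub_cancel_left, norm_smul, hE0, mul_one] at h1
      have := le_abs_self r
      rw [Real.norm_eq_abs] at h1
      linarith
    have hmt : Tendsto (fun r : ℝ => r - ‖z‖) atTop atTop :=
      (tendsto_atTop_add_const_right atTop (-‖z‖) tendsto_id).congr
        (fun r => by simp [sub_eq_add_neg])
    exact tendsto_atTop_mono hb hmt
  -- pair comparisons
  have hpairA : ∀ a b : ℝ, 0 ≤ a → a < b →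
      (∀ x, ⟪z, E0⟫ + (a + b) / 2 < ⟪x, E0⟫ →
        u (x - (2 * (⟪x, E0⟫ - (⟪z, E0⟫ + (a + b) / 2))) • E0) ≤ u x) →
      f a ≤ f b := by
    intro a b ha hab hA
    have h1 := hA (z + b • E0) (by rw [hiz]; linarith)
    have h2 : (z + b • E0) - (2 * (⟪z + b • E0, E0⟫ - (⟪z, E0⟫ + (a + b) / 2))) • E0
        = z + a • E0 := by
      rw [hiz]; module
    rw [h2] at h1
    exact h1
  have hpairB : ∀ a b : ℝ, 0 ≤ a → a < b →
      (∀ x, ⟪z, E0⟫ + (a + b) / 2 < ⟪x, E0⟫ →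
        u x ≤ u (x - (2 * (⟪x, E0⟫ - (⟪z, E0⟫ + (a + b) / 2))) • E0)) →
      f b ≤ f a := by
    intro a b ha hab hB
    have h1 := hB (z + b • E0) (by rw [hiz]; linarith)
    have h2 : (z + b • E0) - (2 * (⟪z + b • E0, E0⟫ - (⟪z, E0⟫ + (a + b) / 2))) • E0
        = z + a • E0 := by
      rw [hiz]; module
    rw [h2] at h1
    exact h1
  -- chains
  have hchainA : ∀ mu : ℝ, 0 < mu →
      (∀ x, ⟪z, E0⟫ + mu < ⟪x, E0⟫ →
        u (x - (2 * (⟪x, E0⟫ - (⟪z, E0⟫ + mu))) • E0) ≤ u x) →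
      ∀ a : ℝ, 0 ≤ a → (f a : EReal) ≤ cinf := by
    intro mu hmu hA a ha
    have hstep1 : ∀ c : ℝ, 0 ≤ c → f c ≤ f (c + 2 * mu) := by
      intro c hc
      have h1 := hA (z + (c + 2 * mu) • E0) (by rw [hiz]; linarith)
      have h2 : (z + (c + 2 * mu) • E0) -
          (2 * (⟪z + (c + 2 * mu) • E0, E0⟫ - (⟪z, E0⟫ + mu))) • E0
          = z + (-c) • E0 := by
        rw [hiz]; module
      rw [h2, hfeven c hc] at h1
      exact h1
    have hchain : ∀ k : ℕ, f a ≤ f (a + 2 * mu * k) := by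
      intro k; induction k with
      | zero => simp
      | succ n ih =>
          have h4 : a + 2 * mu * ((n : ℝ) + 1) = (a + 2 * mu * n) + 2 * mu := by ring
          have h5 := hstep1 (a + 2 * mu * n) (by positivity)
          push_cast
          rw [h4]
          exact ih.trans h5
    have hseq : Tendsto (fun k : ℕ => (f (a + 2 * mu * k) : EReal)) atTop (nhds cinf) := by
      apply flim.comp
      apply tendsto_atTop_add_const_left
      exact Tendsto.const_mul_atTop (by positivity) tendsto_natCast_atTop_atTop
    refine ge_of_tendsto hseq (Eventually.of_forall fun k => ?_)
    exact_mod_cast hchain k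
  have hchainB : ∀ mu : ℝ, 0 < mu →
      (∀ x, ⟪z, E0⟫ + mu < ⟪x, E0⟫ →
        u x ≤ u (x - (2 * (⟪x, E0⟫ - (⟪z, E0⟫ + mu))) • E0)) →
      ∀ a : ℝ, 0 ≤ a → cinf ≤ (f a : EReal) := by
    intro mu hmu hB a ha
    have hstep1 : ∀ c : ℝ, 0 ≤ c → f (c + 2 * mu) ≤ f c := by
      intro c hc
      have h1 := hB (z + (c + 2 * mu) • E0) (by rw [hiz]; linarith)
      have h2 : (z + (c + 2 * mu) • E0) -
          (2 * (⟪z + (c + 2 * mu) • E0, E0⟫ - (⟪z, E0⟫ + mu))) • E0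
          = z + (-c) • E0 := by
        rw [hiz]; module
      rw [h2, hfeven c hc] at h1
      exact h1
    have hchain : ∀ k : ℕ, f (a + 2 * mu * k) ≤ f a := by
      intro k; induction k with
      | zero => simp
      | succ n ih =>
          have h4 : a + 2 * mu * ((n : ℝ) + 1) = (a + 2 * mu * n) + 2 * mu := by ring
          have h5 := hstep1 (a + 2 * mu * n) (by positivity)
          push_cast
          rw [h4]
          exact h5.trans ih
    have hseq : Tendsto (fun k : ℕ => (f (a + 2 * mu * k) : EReal)) atTop (nhds cinf) := by
      apply flim.comp
      apply tendsto_atTop_add_const_left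
      exact Tendsto.const_mul_atTop (by positivity) tendsto_natCast_atTop_atTop
    refine le_of_tendsto hseq (Eventually.of_forall fun k => ?_)
    exact_mod_cast hchain k
  -- final case analysis
  by_cases hdec : ∀ a b : ℝ, 0 ≤ a → a ≤ b → f b ≤ f a
  · refine ⟨-z, f, fun a ha b hb hab => hdec a b ha hab, Or.inl fun x => ?_⟩
    rw [sub_neg_eq_add, add_comm]
    exact hfu x
  push_neg at hdec
  obtain ⟨a, b, ha, hab, hfab⟩ := hdec
  have hab' : a < b := by
    rcases lt_or_eq_of_le hab with h | h
    · exact h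
    · exact absurd hfab (by rw [h]; exact lt_irrefl _)
  have hmu0 : 0 < (a + b) / 2 := by linarith
  have hcaseA : ∀ x, ⟪z, E0⟫ + (a + b) / 2 < ⟪x, E0⟫ →
      u (x - (2 * (⟪x, E0⟫ - (⟪z, E0⟫ + (a + b) / 2))) • E0) ≤ u x := by
    rcases hhalf E0 hE0 (⟪z, E0⟫ + (a + b) / 2) with h | h
    · exact h
    · exact absurd (hpairB a b ha hab' h) (not_le.mpr hfab)
  have hcless : ∀ c : ℝ, 0 ≤ c → (f c : EReal) ≤ cinf := hchainA _ hmu0 hcaseA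
  by_cases hinc : ∀ a b : ℝ, 0 ≤ a → a ≤ b → f a ≤ f b
  · refine ⟨-z, fun r => -(f r), fun a ha b hb hab => neg_le_neg (hinc a b ha hab),
      Or.inr fun x => ?_⟩
    rw [sub_neg_eq_add, add_comm]
    rw [hfu x]
  push_neg at hinc
  obtain ⟨c, d, hc, hcd, hfdc⟩ := hinc
  have hcd' : c < d := by
    rcases lt_or_eq_of_le hcd with h | h
    · exact h
    · exact absurd hfdc (by rw [h]; exact lt_irrefl _)
  have hmu1 : 0 < (c + d) / 2 := by linarith
  have hcaseB : ∀ x, ⟪z, E0⟫ + (c + d) / 2 < ⟪x, E0⟫ →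
      u x ≤ u (x - (2 * (⟪x, E0⟫ - (⟪z, E0⟫ + (c + d) / 2))) • E0) := by
    rcases hhalf E0 hE0 (⟪z, E0⟫ + (c + d) / 2) with h | h
    · exact absurd (hpairA c d hc hcd' h) (not_le.mpr hfdc)
    · exact h
  have hcmore : ∀ t : ℝ, 0 ≤ t → cinf ≤ (f t : EReal) := hchainB _ hmu1 hcaseB
  have hfeq : f a = f b := by
    have h1 : (f a : EReal) = cinf := le_antisymm (hcless a ha) (hcmore a ha)
    have h2 : (f b : EReal) = cinf := le_antisymm (hcless b (ha.trans hab)) (hcmore b (ha.trans hab))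
    exact_mod_cast h1.trans h2.symm
  exact absurd hfeq (ne_of_lt hfab)
end

section
/- Let δ : ℝ^N → ℝ be twice continuously differentiable near 0 with δ(0) = 0, ∇δ(0) = e₂ (the second standard basis vector), and ∇²δ(0) diagonal. Set η̄ = e₂ - e₁ and δ̄(x) = δ(x - 2 x₁ e₁) (reflection in the first coordinate). Then for any s ∈ (0,1), δ(t η̄)^s - δ̄(t η̄)^s = o(t^{1+s}) as t → 0⁺. -/
open Asymptotics

lemma aux_o_sq {h h' : ℝ → ℝ} (hd : ∀ᶠ u in nhds (0:ℝ), HasDerivAt h (h' u) u)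
    (h0 : h 0 = 0) (ho : h' =o[nhds 0] fun u : ℝ => u) :
    ∀ c : ℝ, 0 < c → ∀ᶠ t in nhdsWithin (0:ℝ) (Set.Ioi 0), |h t| ≤ c * t ^ 2 := by
  intro c hc
  have hb : ∀ᶠ u in nhds (0:ℝ), HasDerivAt h (h' u) u ∧ ‖h' u‖ ≤ c * ‖u‖ :=
    hd.and (ho.def hc)
  rw [Metric.eventually_nhds_iff] at hb
  obtain ⟨ε, hε, hball⟩ := hb
  have hmem : Set.Ioo (0:ℝ) ε ∈ nhdsWithin (0:ℝ) (Set.Ioi 0) :=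
    Ioo_mem_nhdsGT_of_mem ⟨le_refl _, hε⟩
  filter_upwards [hmem] with t ht
  obtain ⟨ht0, htε⟩ := ht
  have key : ∀ x ∈ Set.Icc (0:ℝ) t, HasDerivAt h (h' x) x ∧ ‖h' x‖ ≤ c * ‖x‖ := by
    intro x hx
    apply hball
    rw [Real.dist_eq, sub_zero]
    rw [abs_of_nonneg hx.1]
    exact lt_of_le_of_lt hx.2 htε
  have hmvt := Convex.norm_image_sub_le_of_norm_hasDerivWithin_le
    (f := h) (f' := h') (s := Set.Icc (0:ℝ) t) (C := c * t)
    (fun x hx => (key x hx).1.hasDerivWithinAt)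
    (fun x hx => le_trans (key x hx).2 (by
      have : ‖x‖ ≤ t := by rw [Real.norm_eq_abs, abs_of_nonneg hx.1]; exact hx.2
      nlinarith))
    (convex_Icc 0 t) ⟨le_refl 0, ht0.le⟩ ⟨ht0.le, le_refl t⟩
  rw [h0, sub_zero, Real.norm_eq_abs, Real.norm_eq_abs, sub_zero, abs_of_nonneg ht0.le] at hmvt
  calc |h t| ≤ c * t * t := hmvt
    _ = c * t ^ 2 := by ring

set_option maxHeartbeats 1000000 in
theorem stmt_7 {N : ℕ} (s : ℝ) (hs : s ∈ Set.Ioo (0:ℝ) 1)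
    (δ : (Fin (N + 2) → ℝ) → ℝ)
    (hC2 : ContDiffAt ℝ 2 δ 0) (hδ0 : δ 0 = 0)
    (hgrad : ∀ v : Fin (N + 2) → ℝ, fderiv ℝ δ 0 v = v 1)
    (hhess : ∀ i j : Fin (N + 2), i ≠ j →
      fderiv ℝ (fderiv ℝ δ) 0 (Pi.single i 1) (Pi.single j 1) = 0)
    (η : Fin (N + 2) → ℝ) (hη : η = Pi.single 1 1 - Pi.single 0 1)
    (δbar : (Fin (N + 2) → ℝ) → ℝ)
    (hδbar : ∀ x, δbar x = δ (Function.update x 0 (-(x 0)))) :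
    (fun t : ℝ => (δ (t • η)) ^ s - (δbar (t • η)) ^ s)
      =o[nhdsWithin 0 (Set.Ioi 0)] fun t : ℝ => t ^ (1 + s) := by
  obtain ⟨hs0, hs1⟩ := hs
  have h10 : (1 : Fin (N + 2)) ≠ 0 := by
    simp [Fin.ext_iff]
  set η' : Fin (N + 2) → ℝ := Pi.single 1 1 + Pi.single 0 1 with hη'
  have hη1 : η 1 = 1 := by
    rw [hη]; simp [Pi.single_eq_same, Pi.single_eq_of_ne h10]
  have hη'1 : η' 1 = 1 := by
    rw [hη']; simp [Pi.single_eq_same, Pi.single_eq_of_ne h10]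
  -- reflection identity
  have hbar : ∀ t : ℝ, δbar (t • η) = δ (t • η') := by
    intro t
    rw [hδbar]
    congr 1
    funext i
    by_cases hi : i = 0
    · subst hi
      rw [Function.update_self]
      simp [hη, hη', Pi.single_eq_same, Pi.single_eq_of_ne h10]
    · rw [Function.update_of_ne hi]
      by_cases hi1 : i = 1 <;>
        simp [hη, hη', hi1, hi, Pi.single_eq_same, Pi.single_eq_of_ne, Ne.symm hi]
  -- basic smul derivative
  have hsmul : ∀ (v : Fin (N + 2) → ℝ) (t : ℝ), HasDerivAt (fun u : ℝ => u • v) v t := by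
    intro v t
    simpa using (hasDerivAt_id t).smul_const v
  -- differentiability of δ near 0
  have hδdiff : ∀ᶠ x in nhds (0 : Fin (N + 2) → ℝ), DifferentiableAt ℝ δ x :=
    (hC2.eventually (by simp)).mono fun x hx => hx.differentiableAt two_ne_zero
  have htend : ∀ v : Fin (N + 2) → ℝ,
      Filter.Tendsto (fun u : ℝ => u • v) (nhds 0) (nhds (0 : Fin (N + 2) → ℝ)) := by
    intro v
    have : Filter.Tendsto (fun u : ℝ => u • v) (nhds 0) (nhds ((0:ℝ) • v)) :=
      ((continuous_id.smul (continuous_const (y := v))).tendsto (0 : ℝ))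
    simpa using this
  -- second derivative data
  have hδ1 : ContDiffAt ℝ 1 (fderiv ℝ δ) 0 := hC2.fderiv_right (by norm_num)
  have hQd : DifferentiableAt ℝ (fderiv ℝ δ) 0 := hδ1.differentiableAt one_ne_zero
  set Q := fderiv ℝ (fderiv ℝ δ) 0 with hQ
  -- derivative of t ↦ fderiv δ (t•v) w at 0
  have h2 : ∀ v w : Fin (N + 2) → ℝ,
      HasDerivAt (fun t : ℝ => fderiv ℝ δ (t • v) w) (Q v w) 0 := by
    intro v w
    have hF : HasFDerivAt (fderiv ℝ δ) Q ((0 : ℝ) • v) := by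
      rw [zero_smul]; exact hQd.hasFDerivAt
    have h1 : HasDerivAt (fun t : ℝ => fderiv ℝ δ (t • v)) (Q v) 0 :=
      hF.comp_hasDerivAt 0 (hsmul v 0)
    have := h1.clm_apply (hasDerivAt_const 0 w)
    simpa using this
  set g1 : ℝ → ℝ := fun t => fderiv ℝ δ (t • η) η - fderiv ℝ δ (t • η') η' with hg1
  have hQ0 : Q η η - Q η' η' = 0 := by
    have hab : Q (Pi.single 1 1) (Pi.single 0 1) = 0 := hhess 1 0 h10
    have hba : Q (Pi.single 0 1) (Pi.single 1 1) = 0 := hhess 0 1 (Ne.symm h10)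
    rw [hη, hη']
    simp only [map_add, map_sub, ContinuousLinearMap.add_apply, ContinuousLinearMap.sub_apply,
      ContinuousLinearMap.coe_sub', ContinuousLinearMap.coe_add', Pi.sub_apply, Pi.add_apply]
    rw [hab, hba]
    ring
  have hg1d : HasDerivAt g1 0 0 := by
    have := (h2 η η).sub (h2 η' η')
    rwa [hQ0] at this
  have hg10 : g1 0 = 0 := by
    rw [hg1]
    simp only [zero_smul, hgrad, hη1, hη'1, sub_self]
  have hg1o : g1 =o[nhds 0] fun u : ℝ => u := by
    have h := hasDerivAt_iff_isLittleO.mp hg1d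
    simpa [hg10] using h
  -- the difference D
  set D : ℝ → ℝ := fun t => δ (t • η) - δ (t • η') with hD
  have hDd : ∀ᶠ u in nhds (0:ℝ), HasDerivAt D (g1 u) u := by
    filter_upwards [(htend η).eventually hδdiff, (htend η').eventually hδdiff] with u d1 d2
    exact ((d1.hasFDerivAt.comp_hasDerivAt u (hsmul η u)).sub
      (d2.hasFDerivAt.comp_hasDerivAt u (hsmul η' u)))
  have hD0 : D 0 = 0 := by simp [hD, hδ0]
  have hDsq := aux_o_sq hDd hD0 hg1o
  -- first-order behavior of t ↦ δ (t • v) for v with v 1 = 1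
  have hfirst : ∀ v : Fin (N + 2) → ℝ, v 1 = 1 →
      ∀ᶠ t in nhdsWithin (0:ℝ) (Set.Ioi 0), t / 2 ≤ δ (t • v) ∧ δ (t • v) ≤ 2 * t := by
    intro v hv1
    have hF : HasFDerivAt δ (fderiv ℝ δ 0) ((0 : ℝ) • v) := by
      rw [zero_smul]; exact (hC2.differentiableAt two_ne_zero).hasFDerivAt
    have hder : HasDerivAt (fun t : ℝ => δ (t • v)) 1 0 := by
      have := hF.comp_hasDerivAt 0 (hsmul v 0)
      rwa [hgrad v, hv1] at this
    have ho : (fun t : ℝ => δ (t • v) - t) =o[nhds 0] fun t : ℝ => t := by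
      have h := hasDerivAt_iff_isLittleO.mp hder
      simpa [hδ0] using h
    have hb := ho.def (by norm_num : (0:ℝ) < 1/2)
    filter_upwards [nhdsWithin_le_nhds hb, self_mem_nhdsWithin] with t hbt (ht : 0 < t)
    rw [Real.norm_eq_abs, Real.norm_eq_abs, abs_of_pos ht] at hbt
    obtain ⟨ha1, ha2⟩ := abs_le.mp hbt
    constructor <;> linarith
  -- final assembly
  rw [isLittleO_iff]
  intro c hc
  have hεpos : 0 < c / (4 * s) := by positivity
  filter_upwards [hDsq (c / (4 * s)) hεpos, hfirst η hη1, hfirst η' hη'1,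
    self_mem_nhdsWithin] with t hDb hfm hgm (ht : 0 < t)
  have ht2 : (0:ℝ) < t / 2 := by linarith
  -- MVT for rpow on Icc (t/2) (2t)
  have hmvt := Convex.norm_image_sub_le_of_norm_hasDerivWithin_le
    (f := fun x : ℝ => x ^ s) (f' := fun x : ℝ => s * x ^ (s - 1))
    (s := Set.Icc (t/2) (2*t)) (C := s * (t/2) ^ (s - 1))
    (fun x hx => (Real.hasDerivAt_rpow_const
      (Or.inl (lt_of_lt_of_le ht2 hx.1).ne')).hasDerivWithinAt)
    (fun x hx => by
      have hx0 : 0 < x := lt_of_lt_of_le ht2 hx.1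
      rw [Real.norm_eq_abs, abs_of_nonneg (by positivity)]
      have : x ^ (s - 1) ≤ (t/2) ^ (s - 1) :=
        Real.rpow_le_rpow_of_nonpos ht2 hx.1 (by linarith)
      nlinarith)
    (convex_Icc _ _) ⟨hgm.1, hgm.2⟩ ⟨hfm.1, hfm.2⟩
  rw [show δbar (t • η) = δ (t • η') from hbar t]
  have hDt : ‖δ (t • η) - δ (t • η')‖ ≤ c / (4 * s) * t ^ 2 := by
    rw [Real.norm_eq_abs]; exact hDb
  have hchain : ‖δ (t • η) ^ s - δ (t • η') ^ s‖ ≤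
      s * (t/2) ^ (s - 1) * (c / (4 * s) * t ^ 2) := by
    refine le_trans hmvt ?_
    have hC : 0 ≤ s * (t/2) ^ (s - 1) := by positivity
    exact mul_le_mul_of_nonneg_left hDt hC
  refine le_trans hchain ?_
  -- arithmetic: s * (t/2)^(s-1) * (c/(4s) * t²) ≤ c * ‖t^(1+s)‖
  have hts : (t/2) ^ (s - 1) * t ^ 2 = 4 * (t/2) ^ (s + 1) := by
    have h1 : (t/2) ^ (s + 1) = (t/2) ^ (s - 1) * (t/2) ^ (2:ℝ) := by
      rw [← Real.rpow_add ht2]; ring_nf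
    rw [h1, Real.rpow_two]
    ring
  have hle : (t/2) ^ (s + 1) ≤ t ^ (s + 1) :=
    Real.rpow_le_rpow ht2.le (by linarith) (by linarith)
  have hnorm : ‖t ^ (1 + s)‖ = t ^ (s + 1) := by
    rw [Real.norm_eq_abs, abs_of_nonneg (Real.rpow_nonneg ht.le _), add_comm]
  rw [hnorm]
  have : s * (t/2) ^ (s - 1) * (c / (4 * s) * t ^ 2)
      = c * (t/2) ^ (s + 1) := by
    rw [show s * (t/2) ^ (s - 1) * (c / (4 * s) * t ^ 2)
        = c / (4 * s) * s * ((t/2) ^ (s - 1) * t ^ 2) from by ring, hts]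
    field_simp
  rw [this]
  exact mul_le_mul_of_nonneg_left hle hc.le
end
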